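/- Let G be a simple graph with at least one edge. Then |G| is 3-circle connected if and only if G is a finite cycle, i.e. if and only if |G| is homeomorphic to the circle S¹. -/

import Mathlib

open Topology

noncomputable section

variable {V : Type*}

open Classical in
/-- The Dirac function marking a vertex: the point of `|G|` corresponding to vertex `v`. -/
noncomputable def vertexPoint (v : V) : V → ℝ := fun u => if u = v then 1 else 0

open Classical in
/-- The point of `|G|` lying on the edge `vw` at parameter `t` (measured from `v` towards `w`). -/
noncomputable def edgePoint (v w : V) (t : ℝ) : V → ℝ :=
  fun u => (if u = v then 1 - t else 0) + (if u = w then t else 0)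

/-- The geometric realization `|G|` of a simple graph `G`, realized as the set of
formal convex combinations of adjacent pairs of vertices; each closed edge carries
its usual topology as a copy of `[0,1]`. -/
def GraphRealization (G : SimpleGraph V) : Set (V → ℝ) :=
  {x | (∃ v, x = vertexPoint v) ∨
    ∃ v w t, G.Adj v w ∧ t ∈ Set.Icc (0 : ℝ) 1 ∧ x = edgePoint v w t}

/-- A subset of a topological space is an arc if it is homeomorphic to `[0,1]`. -/
def IsArc {X : Type*} [TopologicalSpace X] (A : Set X) : Prop :=
  Nonempty (↥A ≃ₜ ↥unitInterval)

/-- A space is `n`-arc connected if any at most `n` points lie on a common arc. -/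
def NArcConn (X : Type*) [TopologicalSpace X] (n : ℕ) : Prop :=
  ∀ S : Finset X, S.card ≤ n → ∃ A : Set X, IsArc A ∧ ↑S ⊆ A

/-- The unit circle in the plane. -/
def unitCircleSet : Set (ℝ × ℝ) := {p | p.1 ^ 2 + p.2 ^ 2 = 1}

/-- A subset of a topological space is a simple closed curve if homeomorphic to the circle. -/
def IsSimpleClosedCurve {X : Type*} [TopologicalSpace X] (C : Set X) : Prop :=
  Nonempty (↥C ≃ₜ ↥unitCircleSet)

/-- A space is `n`-circle connected if any at most `n` points lie on a common
simple closed curve. -/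
def NCircleConn (X : Type*) [TopologicalSpace X] (n : ℕ) : Prop :=
  ∀ S : Finset X, S.card ≤ n → ∃ C : Set X, IsSimpleClosedCurve C ∧ ↑S ⊆ C

/-- A space is `n`-strongly arc connected if any list of at most `n` points is contained
in an arc, the points appearing along the arc in the listed order. -/
def NStrongArcConn (X : Type*) [TopologicalSpace X] (n : ℕ) : Prop :=
  ∀ l : List X, l.length ≤ n →
    ∃ f : ↥unitInterval → X, Topology.IsEmbedding f ∧
      ∃ t : Fin l.length → ↥unitInterval, Monotone t ∧ ∀ i, f (t i) = l.get i

/-- A graph is `k`-connected if removing fewer than `k` vertices leaves it connected. -/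
def KConnected (G : SimpleGraph V) (k : ℕ) : Prop :=
  ∀ S : Set V, S.encard < (k : ℕ∞) → (G.induce (Sᶜ : Set V)).Connected

/-- A graph is cyclically connected if any two vertices lie on a common cycle. -/
def CyclicallyConnected (G : SimpleGraph V) : Prop :=
  ∀ v w : V, ∃ (u : V) (c : G.Walk u u), c.IsCycle ∧ v ∈ c.support ∧ w ∈ c.support

/-- The circle of radius `r` centered at `c` in the plane. -/
def circleAt (c : ℝ × ℝ) (r : ℝ) : Set (ℝ × ℝ) :=
  {p | (p.1 - c.1) ^ 2 + (p.2 - c.2) ^ 2 = r ^ 2}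

/-- The horizontal segment at height `y` from abscissa `a` to `b`. -/
def hSeg (y a b : ℝ) : Set (ℝ × ℝ) := {p | p.2 = y ∧ a ≤ p.1 ∧ p.1 ≤ b}

/-- The θ-curve: unit circle together with horizontal diameter. -/
def thetaSet : Set (ℝ × ℝ) := circleAt (0, 0) 1 ∪ hSeg 0 (-1) 1

/-- Figure-eight: two unit circles meeting at the origin. -/
def figureEightSet : Set (ℝ × ℝ) := circleAt (-1, 0) 1 ∪ circleAt (1, 0) 1

/-- Lollipop: unit circle with the segment from `(1,0)` to `(2,0)` attached. -/
def lollipopSet : Set (ℝ × ℝ) := circleAt (0, 0) 1 ∪ hSeg 0 1 2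

/-- Lollipop with its free endpoint removed. -/
def openLollipopSet : Set (ℝ × ℝ) := lollipopSet \ {(2, 0)}

/-- Dumbbell: two disjoint unit circles joined by a segment. -/
def dumbbellSet : Set (ℝ × ℝ) := circleAt (-2, 0) 1 ∪ circleAt (2, 0) 1 ∪ hSeg 0 (-1) 1

/-- Happy-face curve: two circles meeting at a point, joined by a further arc. -/
def happyFaceSet : Set (ℝ × ℝ) :=
  circleAt (-1, 0) 1 ∪ circleAt (1, 0) 1 ∪ {p | p.1 ^ 2 + p.2 ^ 2 = 4 ∧ p.2 ≤ 0}

/-- Baguette curve: two disjoint circles joined by two disjoint arcs. -/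
def baguetteSet : Set (ℝ × ℝ) :=
  circleAt (-3, 0) 1 ∪ circleAt (3, 0) 1 ∪ hSeg 0 (-2) 2 ∪ hSeg 1 (-3) 3

/-- A graph is a basic 4-ac graph iff its realization is homeomorphic to a circle,
a θ-curve, a happy-face curve or a baguette curve (this captures precisely the
subdivisions of those four graphs). -/
def IsBasicFourAC {W : Type*} (H : SimpleGraph W) : Prop :=
  Nonempty (↥(GraphRealization H) ≃ₜ ↥unitCircleSet) ∨
  Nonempty (↥(GraphRealization H) ≃ₜ ↥thetaSet) ∨
  Nonempty (↥(GraphRealization H) ≃ₜ ↥happyFaceSet) ∨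
  Nonempty (↥(GraphRealization H) ≃ₜ ↥baguetteSet)

/-- A chain-graph decomposition of the connected graph `G`: links indexed by an
interval `J` of `ℤ`, non-consecutive links are disjoint, consecutive links share
exactly one vertex. -/
structure IsChainGraph (G : SimpleGraph V) (J : Set ℤ) (L : ℤ → G.Subgraph) : Prop where
  connected : G.Connected
  ordConnected : J.OrdConnected
  nonempty : J.Nonempty
  cover : (⨆ i ∈ J, L i) = (⊤ : G.Subgraph)
  sep : ∀ i ∈ J, ∀ j ∈ J, i + 1 < j → (L i).verts ∩ (L j).verts = ∅
  link : ∀ i ∈ J, i + 1 ∈ J → ∃ v, (L i).verts ∩ (L (i + 1)).verts = {v}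

/-- A cut-vertex: a vertex whose removal disconnects the graph. -/
def IsCutVertex (G : SimpleGraph V) (v : V) : Prop :=
  ¬ (G.induce ({v}ᶜ : Set V)).Connected

/-- A block: a maximal 2-connected subgraph. -/
def IsBlock (G : SimpleGraph V) (H : G.Subgraph) : Prop :=
  KConnected H.coe 2 ∧ ∀ H' : G.Subgraph, H ≤ H' → KConnected H'.coe 2 → H' = H

/-- The block graph of `G`: the bipartite graph on cut-vertices and blocks, a cut-vertex
being adjacent to the blocks containing it. -/
def BlockGraph (G : SimpleGraph V) :
    SimpleGraph ({v : V // IsCutVertex G v} ⊕ {H : G.Subgraph // IsBlock G H}) :=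
  SimpleGraph.fromRel fun a b =>
    ∃ (c : {v : V // IsCutVertex G v}) (B : {H : G.Subgraph // IsBlock G H}),
      a = Sum.inl c ∧ b = Sum.inr B ∧ (c : V) ∈ (B : G.Subgraph).verts

/-- An `A`–`B` path: a path starting in `A`, ending in `B` and meeting `A ∪ B` only
in these two endvertices. -/
structure ABPath (G : SimpleGraph V) (A B : Set V) where
  first : V
  last : V
  walk : G.Walk first last
  isPath : walk.IsPath
  firstA : first ∈ A
  lastB : last ∈ B
  meetA : ∀ v ∈ walk.support, v ∈ A → v = first
  meetB : ∀ v ∈ walk.support, v ∈ B → v = last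

/-- A family of pairwise vertex-disjoint paths. -/
def PathFamilyDisjoint {G : SimpleGraph V} {A B : Set V} {k : ℕ}
    (P : Fin k → ABPath G A B) : Prop :=
  ∀ i j, i ≠ j → ∀ v, v ∈ (P i).walk.support → v ∉ (P j).walk.support

/-- The set of vertices used by a family of paths. -/
def familySupport {G : SimpleGraph V} {A B : Set V} {k : ℕ}
    (P : Fin k → ABPath G A B) : Set V :=
  {v | ∃ i, v ∈ (P i).walk.support}

/-- The set of edges used by a family of paths. -/
def familyEdges {G : SimpleGraph V} {A B : Set V} {k : ℕ}
    (P : Fin k → ABPath G A B) : Set (Sym2 V) :=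
  {e | ∃ i, e ∈ (P i).walk.edges}

/-- A walk `W` (with no repeated edges) is alternating with respect to the disjoint
path family `P`: it starts in `A` off the paths; repeated vertices lie on paths of the
family; upon hitting a path by a new edge it follows that path backwards for at least
one edge; and it traverses edges of paths of the family only backwards. -/
structure IsAlternatingWalk {G : SimpleGraph V} {A B : Set V} {k : ℕ}
    (P : Fin k → ABPath G A B) {x y : V} (W : G.Walk x y) : Prop where
  trail : W.IsTrail
  startA : x ∈ A
  startOff : x ∉ familySupport P
  repeats : ∀ v, List.Duplicate v W.support → v ∈ familySupport P
  follows : ∀ (i : ℕ) (hi : i < W.darts.length) (j : Fin k),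
      (W.darts.get ⟨i, hi⟩).snd ∈ (P j).walk.support →
      (W.darts.get ⟨i, hi⟩).edge ∉ (P j).walk.edges →
      ∃ h : i + 1 < W.darts.length, (W.darts.get ⟨i + 1, h⟩).symm ∈ (P j).walk.darts
  backward : ∀ d ∈ W.darts, ∀ j : Fin k,
      d.edge ∈ (P j).walk.edges → d.symm ∈ (P j).walk.darts

end


section Extra
open Set

section Aux
open Set

variable {V : Type*} {G : SimpleGraph V}

lemma vertexPoint_self (v : V) : vertexPoint v v = 1 := by
  unfold vertexPoint; rw [if_pos rfl]

lemma vertexPoint_ne {v u : V} (h : u ≠ v) : vertexPoint v u = 0 := by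
  unfold vertexPoint; rw [if_neg h]

lemma edgePoint_fst {v w : V} (h : v ≠ w) (t : ℝ) : edgePoint v w t v = 1 - t := by
  unfold edgePoint; rw [if_pos rfl, if_neg h]; ring

lemma edgePoint_snd {v w : V} (h : v ≠ w) (t : ℝ) : edgePoint v w t w = t := by
  unfold edgePoint; rw [if_neg (Ne.symm h), if_pos rfl]; ring

lemma edgePoint_other {v w u : V} (hu : u ≠ v) (hu' : u ≠ w) (t : ℝ) :
    edgePoint v w t u = 0 := by
  unfold edgePoint; rw [if_neg hu, if_neg hu']; ring

lemma edgePoint_flip (v w : V) (t : ℝ) : edgePoint v w t = edgePoint w v (1 - t) := by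
  funext u
  unfold edgePoint
  by_cases h1 : u = v <;> by_cases h2 : u = w <;>
    simp only [if_pos, if_neg, h1, h2, if_true, if_false] <;> ring

lemma edgePoint_zero (v w : V) : edgePoint v w 0 = vertexPoint v := by
  funext u
  unfold edgePoint vertexPoint
  simp only [sub_zero, ite_self, add_zero]

lemma edgePoint_one (v w : V) : edgePoint v w 1 = vertexPoint w := by
  rw [edgePoint_flip]; norm_num [edgePoint_zero]

lemma vertexPoint_mem (u : V) : vertexPoint u ∈ GraphRealization G := Or.inl ⟨u, rfl⟩

lemma edgePoint_mem {v w : V} (h : G.Adj v w) {t : ℝ} (ht : t ∈ Icc (0:ℝ) 1) :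
    edgePoint v w t ∈ GraphRealization G := Or.inr ⟨v, w, t, h, ht, rfl⟩

lemma mem_realization_cases {x : V → ℝ} (hx : x ∈ GraphRealization G) :
    (∃ u, x = vertexPoint u) ∨
      ∃ v w t, G.Adj v w ∧ t ∈ Ioo (0:ℝ) 1 ∧ x = edgePoint v w t := by
  rcases hx with ⟨u, rfl⟩ | ⟨v, w, t, hadj, ht, rfl⟩
  · exact Or.inl ⟨u, rfl⟩
  · rcases eq_or_lt_of_le ht.1 with h0 | h0
    · exact Or.inl ⟨v, by rw [← h0, edgePoint_zero]⟩
    rcases eq_or_lt_of_le ht.2 with h1 | h1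
    · exact Or.inl ⟨w, by rw [h1, edgePoint_one]⟩
    · exact Or.inr ⟨v, w, t, hadj, ⟨h0, h1⟩, rfl⟩

lemma support_subset {v w u : V} {t : ℝ} (h : edgePoint v w t u ≠ 0) : u = v ∨ u = w := by
  by_contra hc
  push_neg at hc
  exact h (edgePoint_other hc.1 hc.2 t)

/-- Canonical description of points with two coordinates in `(0,1)`. -/
lemma eq_edgePoint_of_coords {x : V → ℝ} (hx : x ∈ GraphRealization G) {v w : V}
    (hvw : v ≠ w) (hv : x v ∈ Ioo (0:ℝ) 1) (hw : x w ∈ Ioo (0:ℝ) 1) :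
    G.Adj v w ∧ x = edgePoint v w (x w) := by
  rcases mem_realization_cases hx with ⟨u, rfl⟩ | ⟨a, b, t, hadj, ht, rfl⟩
  · by_cases h : v = u
    · rw [h, vertexPoint_self] at hv; exact absurd hv.2 (lt_irrefl 1)
    · rw [vertexPoint_ne h] at hv; exact absurd hv.1 (lt_irrefl 0)
  · have hab : a ≠ b := hadj.ne
    have hva : v = a ∨ v = b := support_subset (ne_of_gt hv.1)
    have hwa : w = a ∨ w = b := support_subset (ne_of_gt hw.1)
    rcases hva with rfl | rfl <;> rcases hwa with rfl | rfl
    · exact absurd rfl hvw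
    · refine ⟨hadj, ?_⟩; rw [edgePoint_snd hab]
    · refine ⟨hadj.symm, ?_⟩
      rw [edgePoint_fst hab, edgePoint_flip]
    · exact absurd rfl hvw

/-- Canonical description of non-vertex points in the star of `u`. -/
lemma star_cases {x : V → ℝ} (hx : x ∈ GraphRealization G) {u : V}
    (hu : 1/2 < x u) (hne : x ≠ vertexPoint u) :
    ∃ w, G.Adj u w ∧ x w ∈ Ioo (0:ℝ) (1/2) ∧ x = edgePoint u w (x w) := by
  rcases mem_realization_cases hx with ⟨p, rfl⟩ | ⟨a, b, t, hadj, ht, rfl⟩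
  · by_cases h : p = u
    · exact absurd (by rw [h]) hne
    · rw [vertexPoint_ne (Ne.symm h)] at hu; norm_num at hu
  · have hab : a ≠ b := hadj.ne
    obtain ⟨ht0, ht1⟩ := ht
    have hua : u = a ∨ u = b := by
      refine support_subset (ne_of_gt (lt_trans ?_ hu)); norm_num
    rcases hua with rfl | rfl
    · refine ⟨b, hadj, ?_, ?_⟩
      · rw [edgePoint_snd hab]
        rw [edgePoint_fst hab] at hu
        exact ⟨ht0, by linarith⟩
      · rw [edgePoint_snd hab]
    · refine ⟨a, hadj.symm, ?_, ?_⟩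
      · rw [edgePoint_fst hab]
        rw [edgePoint_snd hab] at hu
        exact ⟨by linarith, by linarith⟩
      · rw [edgePoint_fst hab, edgePoint_flip]

lemma edgePoint_inj {v w : V} (h : v ≠ w) {s s' : ℝ}
    (hss : edgePoint v w s = edgePoint v w s') : s = s' := by
  have := congrFun hss w
  rwa [edgePoint_snd h, edgePoint_snd h] at this

lemma continuous_edgePoint (v w : V) : Continuous fun s : ℝ => edgePoint v w s := by
  refine continuous_pi fun u => ?_
  unfold edgePoint
  split_ifs <;> continuity

end Aux

section CircleTop

lemma isClosed_unitCircleSet : IsClosed unitCircleSet :=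
  isClosed_eq (by fun_prop) continuous_const

lemma isCompact_unitCircleSet : IsCompact unitCircleSet := by
  have hb : unitCircleSet ⊆ Metric.closedBall 0 1 := by
    intro p hp
    have hp' : p.1 ^ 2 + p.2 ^ 2 = 1 := hp
    simp only [Metric.mem_closedBall, Prod.dist_eq, Real.dist_eq, sup_le_iff, Prod.fst_zero,
      Prod.snd_zero, sub_zero]
    constructor <;> rw [abs_le] <;>
      exact ⟨by nlinarith [sq_nonneg p.1, sq_nonneg p.2], by nlinarith [sq_nonneg p.1, sq_nonneg p.2]⟩
  exact Metric.isCompact_of_isClosed_isBounded isClosed_unitCircleSet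
    (Metric.isBounded_closedBall.subset hb)

lemma isPreconnected_unitCircleSet : IsPreconnected unitCircleSet := by
  have hu : IsPreconnected ((fun x : ℝ => (x, Real.sqrt (1 - x ^ 2))) '' Icc (-1) 1) :=
    isPreconnected_Icc.image _ (Continuous.continuousOn (by fun_prop))
  have hl : IsPreconnected ((fun x : ℝ => (x, -Real.sqrt (1 - x ^ 2))) '' Icc (-1) 1) :=
    isPreconnected_Icc.image _ (Continuous.continuousOn (by fun_prop))
  have hmem : ((-1 : ℝ), (0 : ℝ)) ∈ (fun x : ℝ => (x, Real.sqrt (1 - x ^ 2))) '' Icc (-1) 1 := by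
    refine ⟨-1, ⟨le_refl _, by norm_num⟩, ?_⟩
    norm_num
  have hmem' : ((-1 : ℝ), (0 : ℝ)) ∈ (fun x : ℝ => (x, -Real.sqrt (1 - x ^ 2))) '' Icc (-1) 1 := by
    refine ⟨-1, ⟨le_refl _, by norm_num⟩, ?_⟩
    norm_num
  have heq : unitCircleSet =
      (fun x : ℝ => (x, Real.sqrt (1 - x ^ 2))) '' Icc (-1) 1 ∪
        (fun x : ℝ => (x, -Real.sqrt (1 - x ^ 2))) '' Icc (-1) 1 := by
    ext p
    constructor
    · intro hp
      have hp' : p.1 ^ 2 + p.2 ^ 2 = 1 := hp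
      have h1 : p.1 ∈ Icc (-1 : ℝ) 1 := by
        constructor <;> nlinarith [sq_nonneg p.2]
      have hsq : 1 - p.1 ^ 2 = p.2 ^ 2 := by linarith
      rcases le_or_gt 0 p.2 with h2 | h2
      · left
        refine ⟨p.1, h1, ?_⟩
        have hh : Real.sqrt (1 - p.1 ^ 2) = p.2 := by
          rw [hsq, Real.sqrt_sq_eq_abs, abs_of_nonneg h2]
        show (p.1, Real.sqrt (1 - p.1 ^ 2)) = p
        rw [hh]
      · right
        refine ⟨p.1, h1, ?_⟩
        have hh : Real.sqrt (1 - p.1 ^ 2) = -p.2 := by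
          rw [hsq, Real.sqrt_sq_eq_abs, abs_of_neg h2]
        show (p.1, -Real.sqrt (1 - p.1 ^ 2)) = p
        rw [hh, neg_neg]
    · rintro (⟨x, hx, rfl⟩ | ⟨x, hx, rfl⟩) <;>
      · have h0 : (0:ℝ) ≤ 1 - x ^ 2 := by nlinarith [hx.1, hx.2]
        show _ ^ 2 + _ ^ 2 = 1
        dsimp only
        nlinarith [Real.sq_sqrt h0]
  rw [heq]
  exact hu.union _ hmem hmem' hl

lemma circle_basis {z : ℝ × ℝ} (hz : z ∈ unitCircleSet) {O : Set (ℝ × ℝ)} (hO : IsOpen O)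
    (hzO : z ∈ O) :
    ∃ c : ℝ, 0 < c ∧ c < 1 ∧ ∀ p ∈ unitCircleSet, c < p.1 * z.1 + p.2 * z.2 → p ∈ O := by
  classical
  set K := unitCircleSet ∩ Oᶜ with hK
  by_cases hKne : K.Nonempty
  · have hKc : IsCompact K := isCompact_unitCircleSet.inter_right hO.isClosed_compl
    obtain ⟨p0, hp0K, hp0max⟩ := hKc.exists_isMaxOn hKne
      ((Continuous.continuousOn (by fun_prop) :
        ContinuousOn (fun p : ℝ × ℝ => p.1 * z.1 + p.2 * z.2) K))
    have hz' : z.1 ^ 2 + z.2 ^ 2 = 1 := hz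
    have hp0' : p0.1 ^ 2 + p0.2 ^ 2 = 1 := hp0K.1
    have hne : p0 ≠ z := fun h => hp0K.2 (h ▸ hzO)
    have hlt : p0.1 * z.1 + p0.2 * z.2 < 1 := by
      rcases lt_or_ge (p0.1 * z.1 + p0.2 * z.2) 1 with h | h
      · exact h
      · exfalso
        have h2 : p0.1 = z.1 := by nlinarith [sq_nonneg (p0.1 - z.1), sq_nonneg (p0.2 - z.2)]
        have h3 : p0.2 = z.2 := by nlinarith [sq_nonneg (p0.1 - z.1), sq_nonneg (p0.2 - z.2)]
        exact hne (Prod.ext h2 h3)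
    refine ⟨max (p0.1 * z.1 + p0.2 * z.2) (1 / 2), lt_max_of_lt_right (by norm_num),
      max_lt hlt (by norm_num), fun p hp hdot => ?_⟩
    by_contra hpO
    have hle : p.1 * z.1 + p.2 * z.2 ≤ p0.1 * z.1 + p0.2 * z.2 := hp0max ⟨hp, hpO⟩
    have : p.1 * z.1 + p.2 * z.2 ≤ max (p0.1 * z.1 + p0.2 * z.2) (1 / 2) :=
      le_trans hle (le_max_left _ _)
    linarith
  · exact ⟨1 / 2, by norm_num, by norm_num, fun p hp _ => by
      by_contra hpO
      exact hKne ⟨p, hp, hpO⟩⟩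

end CircleTop

lemma circle_struct {z : ℝ × ℝ} (hz : z ∈ unitCircleSet) {O : Set (ℝ × ℝ)} (hO : IsOpen O)
    (hzO : z ∈ O) :
    ∃ N A B ON OA OB : Set (ℝ × ℝ),
      IsOpen ON ∧ IsOpen OA ∧ IsOpen OB ∧
      N = unitCircleSet ∩ ON ∧ A = unitCircleSet ∩ OA ∧ B = unitCircleSet ∩ OB ∧
      z ∈ N ∧ N ⊆ O ∧ IsPreconnected N ∧ N \ {z} = A ∪ B ∧ Disjoint A B ∧
      A.Nonempty ∧ B.Nonempty ∧ IsPreconnected A ∧ IsPreconnected B := by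
  obtain ⟨c, hc0, hc1, hcO⟩ := circle_basis hz hO hzO
  have hz' : z.1 ^ 2 + z.2 ^ 2 = 1 := hz
  set φ : ℝ → ℝ × ℝ := fun d => (d * z.1 - Real.sqrt (1 - d ^ 2) * z.2,
    d * z.2 + Real.sqrt (1 - d ^ 2) * z.1) with hφ
  set ψ : ℝ → ℝ × ℝ := fun d => (d * z.1 + Real.sqrt (1 - d ^ 2) * z.2,
    d * z.2 - Real.sqrt (1 - d ^ 2) * z.1) with hψ
  have hφc : Continuous φ := by
    apply Continuous.prodMk <;> fun_prop
  have hψc : Continuous ψ := by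
    apply Continuous.prodMk <;> fun_prop
  -- representation of circle points in the (z, z^⊥) frame
  have hrep1 : ∀ p : ℝ × ℝ, p ∈ unitCircleSet →
      p.1 = (p.1 * z.1 + p.2 * z.2) * z.1 - (z.1 * p.2 - z.2 * p.1) * z.2 := by
    intro p hp; linear_combination (-p.1) * hz'
  have hrep2 : ∀ p : ℝ × ℝ, p ∈ unitCircleSet →
      p.2 = (p.1 * z.1 + p.2 * z.2) * z.2 + (z.1 * p.2 - z.2 * p.1) * z.1 := by
    intro p hp; linear_combination (-p.2) * hz'
  have hds : ∀ p : ℝ × ℝ, p ∈ unitCircleSet →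
      (p.1 * z.1 + p.2 * z.2) ^ 2 + (z.1 * p.2 - z.2 * p.1) ^ 2 = 1 := by
    intro p hp
    have hp' : p.1 ^ 2 + p.2 ^ 2 = 1 := hp
    linear_combination (p.1 ^ 2 + p.2 ^ 2) * hz' + hp'
  -- facts about φ, ψ
  have hsq : ∀ d : ℝ, 0 < d → d ≤ 1 → Real.sqrt (1 - d ^ 2) ^ 2 = 1 - d ^ 2 := by
    intro d h0 h1; exact Real.sq_sqrt (by nlinarith)
  have hφfacts : ∀ d : ℝ, c < d → d ≤ 1 → φ d ∈ unitCircleSet ∧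
      ((φ d).1 * z.1 + (φ d).2 * z.2 = d) ∧
      (z.1 * (φ d).2 - z.2 * (φ d).1 = Real.sqrt (1 - d ^ 2)) := by
    intro d hcd hd1
    have h0 : 0 < d := lt_trans hc0 hcd
    have hs2 := hsq d h0 hd1
    refine ⟨?_, ?_, ?_⟩
    · show (d * z.1 - Real.sqrt (1 - d ^ 2) * z.2) ^ 2 +
        (d * z.2 + Real.sqrt (1 - d ^ 2) * z.1) ^ 2 = 1
      linear_combination (d ^ 2 + Real.sqrt (1 - d ^ 2) ^ 2) * hz' + hs2
    · show (d * z.1 - Real.sqrt (1 - d ^ 2) * z.2) * z.1 +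
        (d * z.2 + Real.sqrt (1 - d ^ 2) * z.1) * z.2 = d
      linear_combination d * hz'
    · show z.1 * (d * z.2 + Real.sqrt (1 - d ^ 2) * z.1) -
        z.2 * (d * z.1 - Real.sqrt (1 - d ^ 2) * z.2) = Real.sqrt (1 - d ^ 2)
      linear_combination Real.sqrt (1 - d ^ 2) * hz'
  have hψfacts : ∀ d : ℝ, c < d → d ≤ 1 → ψ d ∈ unitCircleSet ∧
      ((ψ d).1 * z.1 + (ψ d).2 * z.2 = d) ∧
      (z.1 * (ψ d).2 - z.2 * (ψ d).1 = -Real.sqrt (1 - d ^ 2)) := by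
    intro d hcd hd1
    have h0 : 0 < d := lt_trans hc0 hcd
    have hs2 := hsq d h0 hd1
    refine ⟨?_, ?_, ?_⟩
    · show (d * z.1 + Real.sqrt (1 - d ^ 2) * z.2) ^ 2 +
        (d * z.2 - Real.sqrt (1 - d ^ 2) * z.1) ^ 2 = 1
      linear_combination (d ^ 2 + Real.sqrt (1 - d ^ 2) ^ 2) * hz' + hs2
    · show (d * z.1 + Real.sqrt (1 - d ^ 2) * z.2) * z.1 +
        (d * z.2 - Real.sqrt (1 - d ^ 2) * z.1) * z.2 = d
      linear_combination d * hz'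
    · show z.1 * (d * z.2 - Real.sqrt (1 - d ^ 2) * z.1) -
        z.2 * (d * z.1 + Real.sqrt (1 - d ^ 2) * z.2) = -Real.sqrt (1 - d ^ 2)
      linear_combination (-Real.sqrt (1 - d ^ 2)) * hz'
  -- bounds for circle points in ON
  have hdbounds : ∀ p : ℝ × ℝ, p ∈ unitCircleSet → c < p.1 * z.1 + p.2 * z.2 →
      p.1 * z.1 + p.2 * z.2 ≤ 1 := by
    intro p hp hcd
    have := hds p hp
    nlinarith [sq_nonneg (z.1 * p.2 - z.2 * p.1)]
  -- if cross = 0 and p ∈ N then p = z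
  have hcross0 : ∀ p : ℝ × ℝ, p ∈ unitCircleSet → c < p.1 * z.1 + p.2 * z.2 →
      z.1 * p.2 - z.2 * p.1 = 0 → p = z := by
    intro p hp hcd hcr
    have h1 := hds p hp
    rw [hcr] at h1
    have hd1 : p.1 * z.1 + p.2 * z.2 = 1 := by nlinarith
    have e1 := hrep1 p hp
    have e2 := hrep2 p hp
    rw [hcr, hd1] at e1 e2
    simp only [one_mul, zero_mul, sub_zero, add_zero] at e1 e2
    exact Prod.ext e1 e2
  -- recover parameters: p ∈ N with cross > 0 is φ of its dot
  have hrecφ : ∀ p : ℝ × ℝ, p ∈ unitCircleSet → c < p.1 * z.1 + p.2 * z.2 →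
      0 ≤ z.1 * p.2 - z.2 * p.1 → p = φ (p.1 * z.1 + p.2 * z.2) := by
    intro p hp hcd hcr
    have h1 := hds p hp
    have hs : Real.sqrt (1 - (p.1 * z.1 + p.2 * z.2) ^ 2) = z.1 * p.2 - z.2 * p.1 := by
      rw [show 1 - (p.1 * z.1 + p.2 * z.2) ^ 2 = (z.1 * p.2 - z.2 * p.1) ^ 2 by linarith,
        Real.sqrt_sq_eq_abs, abs_of_nonneg hcr]
    have e1 := hrep1 p hp
    have e2 := hrep2 p hp
    apply Prod.ext
    · show p.1 = _ * z.1 - Real.sqrt (1 - (p.1 * z.1 + p.2 * z.2) ^ 2) * z.2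
      rw [hs]; linarith [e1]
    · show p.2 = _ * z.2 + Real.sqrt (1 - (p.1 * z.1 + p.2 * z.2) ^ 2) * z.1
      rw [hs]; linarith [e2]
  have hrecψ : ∀ p : ℝ × ℝ, p ∈ unitCircleSet → c < p.1 * z.1 + p.2 * z.2 →
      z.1 * p.2 - z.2 * p.1 ≤ 0 → p = ψ (p.1 * z.1 + p.2 * z.2) := by
    intro p hp hcd hcr
    have h1 := hds p hp
    have hs : Real.sqrt (1 - (p.1 * z.1 + p.2 * z.2) ^ 2) = -(z.1 * p.2 - z.2 * p.1) := by
      rw [show 1 - (p.1 * z.1 + p.2 * z.2) ^ 2 = (z.1 * p.2 - z.2 * p.1) ^ 2 by linarith,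
        Real.sqrt_sq_eq_abs, abs_of_nonpos hcr]
    have e1 := hrep1 p hp
    have e2 := hrep2 p hp
    apply Prod.ext
    · show p.1 = _ * z.1 + Real.sqrt (1 - (p.1 * z.1 + p.2 * z.2) ^ 2) * z.2
      rw [hs]; linarith [e1]
    · show p.2 = _ * z.2 - Real.sqrt (1 - (p.1 * z.1 + p.2 * z.2) ^ 2) * z.1
      rw [hs]; linarith [e2]
  -- the sets
  refine ⟨unitCircleSet ∩ {p | c < p.1 * z.1 + p.2 * z.2},
    unitCircleSet ∩ {p | c < p.1 * z.1 + p.2 * z.2 ∧ 0 < z.1 * p.2 - z.2 * p.1},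
    unitCircleSet ∩ {p | c < p.1 * z.1 + p.2 * z.2 ∧ z.1 * p.2 - z.2 * p.1 < 0},
    _, _, _, ?_, ?_, ?_, rfl, rfl, rfl, ?_, ?_, ?_, ?_, ?_, ?_, ?_, ?_, ?_⟩
  · have hdotc : Continuous fun p : ℝ × ℝ => p.1 * z.1 + p.2 * z.2 := by fun_prop
    exact isOpen_lt continuous_const hdotc
  · have hdotc : Continuous fun p : ℝ × ℝ => p.1 * z.1 + p.2 * z.2 := by fun_prop
    have hcrc : Continuous fun p : ℝ × ℝ => z.1 * p.2 - z.2 * p.1 := by fun_prop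
    simp only [Set.setOf_and]
    exact (isOpen_lt continuous_const hdotc).inter (isOpen_lt continuous_const hcrc)
  · have hdotc : Continuous fun p : ℝ × ℝ => p.1 * z.1 + p.2 * z.2 := by fun_prop
    have hcrc : Continuous fun p : ℝ × ℝ => z.1 * p.2 - z.2 * p.1 := by fun_prop
    simp only [Set.setOf_and]
    exact (isOpen_lt continuous_const hdotc).inter (isOpen_lt hcrc continuous_const)
  · refine ⟨hz, ?_⟩
    have hzz : z.1 * z.1 + z.2 * z.2 = 1 := by linear_combination hz'
    show c < z.1 * z.1 + z.2 * z.2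
    rw [hzz]; exact hc1
  · exact fun p hp => hcO p hp.1 hp.2
  · -- N preconnected
    have hNeq : unitCircleSet ∩ {p | c < p.1 * z.1 + p.2 * z.2} =
        φ '' Ioc c 1 ∪ ψ '' Ioc c 1 := by
      ext p
      constructor
      · rintro ⟨hp, hd⟩
        have hd1 := hdbounds p hp hd
        rcases le_or_gt 0 (z.1 * p.2 - z.2 * p.1) with hcr | hcr
        · exact Or.inl ⟨_, ⟨hd, hd1⟩, (hrecφ p hp hd hcr).symm⟩
        · exact Or.inr ⟨_, ⟨hd, hd1⟩, (hrecψ p hp hd hcr.le).symm⟩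
      · rintro (⟨d, hd, rfl⟩ | ⟨d, hd, rfl⟩)
        · exact ⟨(hφfacts d hd.1 hd.2).1, by rw [mem_setOf_eq, (hφfacts d hd.1 hd.2).2.1]; exact hd.1⟩
        · exact ⟨(hψfacts d hd.1 hd.2).1, by rw [mem_setOf_eq, (hψfacts d hd.1 hd.2).2.1]; exact hd.1⟩
    rw [hNeq]
    have h0 : Real.sqrt (1 - 1 ^ 2) = 0 := by norm_num
    have hz1 : φ 1 = z := by
      show ((1 : ℝ) * z.1 - Real.sqrt (1 - 1 ^ 2) * z.2, (1:ℝ) * z.2 + Real.sqrt (1 - 1 ^ 2) * z.1) = z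
      rw [h0]; simp
    have hz2 : ψ 1 = z := by
      show ((1 : ℝ) * z.1 + Real.sqrt (1 - 1 ^ 2) * z.2, (1:ℝ) * z.2 - Real.sqrt (1 - 1 ^ 2) * z.1) = z
      rw [h0]; simp
    exact IsPreconnected.union z
      (⟨1, ⟨hc1, le_refl 1⟩, hz1⟩)
      (⟨1, ⟨hc1, le_refl 1⟩, hz2⟩)
      (isPreconnected_Ioc.image _ hφc.continuousOn)
      (isPreconnected_Ioc.image _ hψc.continuousOn)
  · -- N \ {z} = A ∪ B
    ext p
    constructor
    · rintro ⟨⟨hp, hd⟩, hpz⟩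
      rcases lt_trichotomy (z.1 * p.2 - z.2 * p.1) 0 with h | h | h
      · exact Or.inr ⟨hp, hd, h⟩
      · exact absurd (hcross0 p hp hd h) hpz
      · exact Or.inl ⟨hp, hd, h⟩
    · rintro (⟨hp, hd, hcr⟩ | ⟨hp, hd, hcr⟩) <;>
        refine ⟨⟨hp, hd⟩, fun hpz => ?_⟩
      · rw [mem_singleton_iff] at hpz
        subst hpz
        simp only [mul_comm] at hcr
        linarith
      · rw [mem_singleton_iff] at hpz
        subst hpz
        simp only [mul_comm] at hcr
        linarith
  · -- disjoint
    rw [disjoint_left]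
    rintro p ⟨_, _, h1⟩ ⟨_, _, h2⟩
    linarith
  · -- A nonempty
    refine ⟨φ ((c + 1) / 2), (hφfacts _ (by linarith) (by linarith)).1, ?_, ?_⟩
    · rw [(hφfacts _ (by linarith) (by linarith)).2.1]; linarith
    · rw [(hφfacts _ (by linarith : c < (c+1)/2) (by linarith)).2.2]
      apply Real.sqrt_pos.mpr
      nlinarith
  · -- B nonempty
    refine ⟨ψ ((c + 1) / 2), (hψfacts _ (by linarith) (by linarith)).1, ?_, ?_⟩
    · rw [(hψfacts _ (by linarith) (by linarith)).2.1]; linarith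
    · rw [(hψfacts _ (by linarith : c < (c+1)/2) (by linarith)).2.2]
      have : 0 < Real.sqrt (1 - ((c+1)/2) ^ 2) := Real.sqrt_pos.mpr (by nlinarith)
      linarith
  · -- A preconnected
    have hAeq : unitCircleSet ∩ {p | c < p.1 * z.1 + p.2 * z.2 ∧ 0 < z.1 * p.2 - z.2 * p.1} =
        φ '' Ioo c 1 := by
      ext p
      constructor
      · rintro ⟨hp, hd, hcr⟩
        have hd1 := hdbounds p hp hd
        have hdlt : p.1 * z.1 + p.2 * z.2 < 1 := by
          rcases lt_or_eq_of_le hd1 with h | h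
          · exact h
          · exfalso
            have := hds p hp
            rw [h] at this
            nlinarith
        exact ⟨_, ⟨hd, hdlt⟩, (hrecφ p hp hd hcr.le).symm⟩
      · rintro ⟨d, hd, rfl⟩
        obtain ⟨hm, hdot, hcr⟩ := hφfacts d hd.1 hd.2.le
        refine ⟨hm, ?_, ?_⟩
        · rw [hdot]; exact hd.1
        · rw [hcr]
          apply Real.sqrt_pos.mpr
          nlinarith [hd.1, hd.2, hc0]
    rw [hAeq]
    exact isPreconnected_Ioo.image _ hφc.continuousOn
  · -- B preconnected
    have hBeq : unitCircleSet ∩ {p | c < p.1 * z.1 + p.2 * z.2 ∧ z.1 * p.2 - z.2 * p.1 < 0} =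
        ψ '' Ioo c 1 := by
      ext p
      constructor
      · rintro ⟨hp, hd, hcr⟩
        have hd1 := hdbounds p hp hd
        have hdlt : p.1 * z.1 + p.2 * z.2 < 1 := by
          rcases lt_or_eq_of_le hd1 with h | h
          · exact h
          · exfalso
            have := hds p hp
            rw [h] at this
            nlinarith
        exact ⟨_, ⟨hd, hdlt⟩, (hrecψ p hp hd hcr.le).symm⟩
      · rintro ⟨d, hd, rfl⟩
        obtain ⟨hm, hdot, hcr⟩ := hψfacts d hd.1 hd.2.le
        refine ⟨hm, ?_, ?_⟩
        · rw [hdot]; exact hd.1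
        · rw [hcr]
          have : 0 < Real.sqrt (1 - d ^ 2) := Real.sqrt_pos.mpr (by nlinarith [hd.1, hd.2, hc0])
          linarith
    rw [hBeq]
    exact isPreconnected_Ioo.image _ hψc.continuousOn

/-- Local structure of a simple closed curve inside an ambient space. -/
lemma scc_local {X : Type*} [TopologicalSpace X] {C : Set X}
    (hC : Nonempty (↥C ≃ₜ ↥unitCircleSet)) {x : X} (hx : x ∈ C) {O : Set X}
    (hO : IsOpen O) (hxO : x ∈ O) :
    ∃ N A B : Set X,
      (∃ ON, IsOpen ON ∧ N = C ∩ ON) ∧ (∃ OA, IsOpen OA ∧ A = C ∩ OA) ∧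
      (∃ OB, IsOpen OB ∧ B = C ∩ OB) ∧
      x ∈ N ∧ N ⊆ O ∧ IsPreconnected N ∧ N \ {x} = A ∪ B ∧ Disjoint A B ∧
      A.Nonempty ∧ B.Nonempty ∧ IsPreconnected A ∧ IsPreconnected B := by
  obtain ⟨e⟩ := hC
  set x' : ↥C := ⟨x, hx⟩ with hx'
  set z : ↥unitCircleSet := e x' with hzdef
  -- transfer O to an ambient open set around z
  have h1 : IsOpen (Subtype.val ⁻¹' O : Set ↥C) := hO.preimage continuous_subtype_val
  have h2 : IsOpen (e.symm ⁻¹' (Subtype.val ⁻¹' O) : Set ↥unitCircleSet) :=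
    h1.preimage e.symm.continuous
  obtain ⟨Oc, hOc, hOceq⟩ := isOpen_induced_iff.mp h2
  have hzOc : (z : ℝ × ℝ) ∈ Oc := by
    have : z ∈ e.symm ⁻¹' (Subtype.val ⁻¹' O) := by
      show e.symm z ∈ Subtype.val ⁻¹' O
      rw [hzdef, Homeomorph.symm_apply_apply]
      exact hxO
    rw [← hOceq] at this
    exact this
  obtain ⟨N₀, A₀, B₀, ON₀, OA₀, OB₀, hON₀, hOA₀, hOB₀, hN₀eq, hA₀eq, hB₀eq, hzN₀, hN₀O,
    hN₀pre, hN₀diff, hdisj₀, hA₀ne, hB₀ne, hA₀pre, hB₀pre⟩ := circle_struct z.2 hOc hzOc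
  -- the pullback operation
  let pull : Set (ℝ × ℝ) → Set X := fun S₀ =>
    Subtype.val '' (e ⁻¹' (Subtype.val ⁻¹' S₀) : Set ↥C)
  have hpull_open : ∀ S₀ OS₀ : Set (ℝ × ℝ), IsOpen OS₀ → S₀ = unitCircleSet ∩ OS₀ →
      ∃ OS, IsOpen OS ∧ pull S₀ = C ∩ OS := by
    intro S₀ OS₀ hOS₀ hS₀eq
    have hpre : (Subtype.val ⁻¹' S₀ : Set ↥unitCircleSet) = Subtype.val ⁻¹' OS₀ := by
      ext a
      simp [hS₀eq, a.2]
    have hopen1 : IsOpen (Subtype.val ⁻¹' S₀ : Set ↥unitCircleSet) := by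
      rw [hpre]; exact hOS₀.preimage continuous_subtype_val
    have hopen2 : IsOpen (e ⁻¹' (Subtype.val ⁻¹' S₀) : Set ↥C) := hopen1.preimage e.continuous
    obtain ⟨OS, hOS, hOSeq⟩ := isOpen_induced_iff.mp hopen2
    refine ⟨OS, hOS, ?_⟩
    show Subtype.val '' (e ⁻¹' (Subtype.val ⁻¹' S₀)) = C ∩ OS
    rw [← hOSeq, Subtype.image_preimage_coe]
  have hpull_pre : ∀ S₀ : Set (ℝ × ℝ), S₀ ⊆ unitCircleSet → IsPreconnected S₀ →
      IsPreconnected (pull S₀) := by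
    intro S₀ hsub hpre
    have h1 : Subtype.val '' (Subtype.val ⁻¹' S₀ : Set ↥unitCircleSet) = S₀ := by
      rw [Subtype.image_preimage_coe, inter_eq_right.mpr hsub]
    have h2 : IsPreconnected (Subtype.val ⁻¹' S₀ : Set ↥unitCircleSet) := by
      have := Topology.IsInducing.subtypeVal (t := unitCircleSet)
      rw [← this.isPreconnected_image, h1]
      exact hpre
    have h3 : (e ⁻¹' (Subtype.val ⁻¹' S₀) : Set ↥C) = e.symm '' (Subtype.val ⁻¹' S₀) := by
      rw [Homeomorph.image_symm]
    have h4 : IsPreconnected (e ⁻¹' (Subtype.val ⁻¹' S₀) : Set ↥C) := by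
      rw [h3]
      exact h2.image _ e.symm.continuous.continuousOn
    exact h4.image _ continuous_subtype_val.continuousOn
  have hpull_ne : ∀ S₀ : Set (ℝ × ℝ), S₀ ⊆ unitCircleSet → S₀.Nonempty →
      (pull S₀).Nonempty := by
    rintro S₀ hsub ⟨p, hp⟩
    refine ⟨(e.symm ⟨p, hsub hp⟩ : ↥C), ⟨e.symm ⟨p, hsub hp⟩, ?_, rfl⟩⟩
    show e (e.symm _) ∈ Subtype.val ⁻¹' S₀
    rw [Homeomorph.apply_symm_apply]
    exact hp
  have hpull_mono : ∀ S₀ T₀ : Set (ℝ × ℝ), S₀ ⊆ T₀ → pull S₀ ⊆ pull T₀ := by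
    intro S₀ T₀ h
    exact image_mono (preimage_mono (preimage_mono h))
  have hpull_union : ∀ S₀ T₀ : Set (ℝ × ℝ), pull (S₀ ∪ T₀) = pull S₀ ∪ pull T₀ := by
    intro S₀ T₀
    show Subtype.val '' (e ⁻¹' (Subtype.val ⁻¹' (S₀ ∪ T₀))) = _
    rw [preimage_union, preimage_union, image_union]
  have hval_inj : Function.Injective (Subtype.val : ↥C → X) := Subtype.val_injective
  have hpull_inj_mem : ∀ (S₀ : Set (ℝ × ℝ)) (y : X), y ∈ pull S₀ ↔
      ∃ hy : y ∈ C, ((e ⟨y, hy⟩ : ↥unitCircleSet) : ℝ × ℝ) ∈ S₀ := by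
    intro S₀ y
    constructor
    · rintro ⟨a, ha, rfl⟩
      exact ⟨a.2, by simpa using ha⟩
    · rintro ⟨hy, h⟩
      exact ⟨⟨y, hy⟩, h, rfl⟩
  refine ⟨pull N₀, pull A₀, pull B₀,
    hpull_open N₀ ON₀ hON₀ hN₀eq, hpull_open A₀ OA₀ hOA₀ hA₀eq, hpull_open B₀ OB₀ hOB₀ hB₀eq,
    ?_, ?_, hpull_pre N₀ (by rw [hN₀eq]; exact inter_subset_left) hN₀pre, ?_, ?_,
    hpull_ne A₀ (by rw [hA₀eq]; exact inter_subset_left) hA₀ne,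
    hpull_ne B₀ (by rw [hB₀eq]; exact inter_subset_left) hB₀ne,
    hpull_pre A₀ (by rw [hA₀eq]; exact inter_subset_left) hA₀pre,
    hpull_pre B₀ (by rw [hB₀eq]; exact inter_subset_left) hB₀pre⟩
  · -- x ∈ pull N₀
    rw [hpull_inj_mem]
    exact ⟨hx, hzN₀⟩
  · -- pull N₀ ⊆ O
    intro y hy
    rw [hpull_inj_mem] at hy
    obtain ⟨hy, hmem⟩ := hy
    have : (e ⟨y, hy⟩ : ↥unitCircleSet) ∈ Subtype.val ⁻¹' Oc := hN₀O hmem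
    rw [hOceq] at this
    have : e.symm (e ⟨y, hy⟩) ∈ Subtype.val ⁻¹' O := this
    rwa [Homeomorph.symm_apply_apply] at this
  · -- pull N₀ \ {x} = pull A₀ ∪ pull B₀
    rw [← hpull_union, ← hN₀diff]
    ext y
    constructor
    · rintro ⟨hyN, hyx⟩
      rw [hpull_inj_mem] at hyN ⊢
      obtain ⟨hy, hmem⟩ := hyN
      refine ⟨hy, hmem, ?_⟩
      intro hcontra
      rw [mem_singleton_iff] at hcontra
      apply hyx
      have hz' : (⟨y, hy⟩ : ↥C) = x' := by
        apply e.injective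
        apply Subtype.val_injective
        exact hcontra
      rw [mem_singleton_iff]
      exact congrArg Subtype.val hz'
    · intro hy
      rw [hpull_inj_mem] at hy
      obtain ⟨hy', hmem, hne⟩ := hy
      constructor
      · rw [hpull_inj_mem]; exact ⟨hy', hmem⟩
      · intro hyx
        rw [mem_singleton_iff] at hyx
        apply hne
        rw [mem_singleton_iff]
        have : (⟨y, hy'⟩ : ↥C) = x' := Subtype.ext hyx
        rw [this, ← hzdef]
  · -- disjoint
    rw [disjoint_left]
    intro y hyA hyB
    rw [hpull_inj_mem] at hyA hyB
    obtain ⟨hy, hmemA⟩ := hyA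
    obtain ⟨hy', hmemB⟩ := hyB
    exact (disjoint_left.mp hdisj₀) hmemA (by convert hmemB)

section SCCGraph

variable {V : Type*} {G : SimpleGraph V}

/-- The whole closed edge `vw` lies in `D`. -/
def EdgeFull (D : Set (V → ℝ)) (v w : V) : Prop :=
  ∀ s ∈ Set.Icc (0:ℝ) 1, edgePoint v w s ∈ D

lemma scc_isClosed {D : Set (V → ℝ)} (hD : Nonempty (↥D ≃ₜ ↥unitCircleSet)) :
    IsClosed D := by
  obtain ⟨e⟩ := hD
  have h1 : CompactSpace ↥unitCircleSet := isCompact_iff_compactSpace.mp isCompact_unitCircleSet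
  have h2 : CompactSpace ↥D := e.symm.compactSpace
  exact (isCompact_iff_compactSpace.mpr h2).isClosed

lemma edge_absorb_right {D : Set (V → ℝ)} (hD : Nonempty (↥D ≃ₜ ↥unitCircleSet))
    (hDsub : D ⊆ GraphRealization G) {v w : V} (hvw : G.Adj v w)
    {t : ℝ} (ht : t ∈ Set.Ioo (0:ℝ) 1) (htD : edgePoint v w t ∈ D)
    {s1 : ℝ} (hs1 : s1 ∈ Set.Icc (0:ℝ) 1) (hts1 : t ≤ s1) : edgePoint v w s1 ∈ D := by
  classical
  have hDcl : IsClosed D := scc_isClosed hD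
  by_contra hs1D
  have hne : v ≠ w := hvw.ne
  set T : Set ℝ := Set.Icc 0 1 ∩ (fun s => edgePoint v w s) ⁻¹' D with hTdef
  have hTcl : IsClosed T := isClosed_Icc.inter (hDcl.preimage (continuous_edgePoint v w))
  have htT : t ∈ T := ⟨⟨ht.1.le, ht.2.le⟩, htD⟩
  set K := T ∩ Set.Icc t s1 with hKdef
  have hKne : K.Nonempty := ⟨t, htT, le_refl t, hts1⟩
  have hKcl : IsClosed K := hTcl.inter isClosed_Icc
  have hKbdd : BddAbove K := ⟨s1, fun x hx => hx.2.2⟩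
  set s0 := sSup K with hs0def
  have hs0K : s0 ∈ K := hKcl.csSup_mem hKne hKbdd
  have hts0 : t ≤ s0 := hs0K.2.1
  have hs0s1 : s0 ≤ s1 := hs0K.2.2
  have hs0T : s0 ∈ T := hs0K.1
  have hs0lt : s0 < s1 := lt_of_le_of_ne hs0s1 (fun h => hs1D (h ▸ hs0T.2))
  have hgap : ∀ s, s0 < s → s ≤ s1 → s ∉ T := by
    intro s h1 h2 hsT
    have hsK : s ∈ K := ⟨hsT, le_trans hts0 h1.le, h2⟩
    exact absurd (le_csSup hKbdd hsK) (not_le.mpr h1)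
  have hs0mem : s0 ∈ Set.Ioo (0:ℝ) 1 := ⟨lt_of_lt_of_le ht.1 hts0, lt_of_lt_of_le hs0lt hs1.2⟩
  have hx0D : edgePoint v w s0 ∈ D := hs0T.2
  set O : Set (V → ℝ) :=
    (fun x : V → ℝ => x v) ⁻¹' Set.Ioo 0 1 ∩ (fun x : V → ℝ => x w) ⁻¹' Set.Ioo 0 1 with hOdef
  have hOopen : IsOpen O :=
    (isOpen_Ioo.preimage (continuous_apply v)).inter (isOpen_Ioo.preimage (continuous_apply w))
  have hx0O : edgePoint v w s0 ∈ O := by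
    constructor
    · show edgePoint v w s0 v ∈ Set.Ioo (0:ℝ) 1
      rw [edgePoint_fst hne]
      exact ⟨by linarith [hs0mem.2], by linarith [hs0mem.1]⟩
    · show edgePoint v w s0 w ∈ Set.Ioo (0:ℝ) 1
      rw [edgePoint_snd hne]
      exact hs0mem
  obtain ⟨N, A, B, ⟨ON, hONo, hNeq⟩, ⟨OA, hOAo, hAeq⟩, ⟨OB, hOBo, hBeq⟩, hx0N, hNO, hNpre,
    hNdiff, hdisj, hAne, hBne, hApre, hBpre⟩ := scc_local hD hx0D hOopen hx0O
  have hNform : ∀ x ∈ N, x ∈ D ∧ x = edgePoint v w (x w) ∧ x w ∈ T := by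
    intro x hxN
    have hxD : x ∈ D := by rw [hNeq] at hxN; exact hxN.1
    have hxO : x ∈ O := hNO hxN
    obtain ⟨_, hform⟩ := eq_edgePoint_of_coords (hDsub hxD) hne hxO.1 hxO.2
    refine ⟨hxD, hform, ⟨⟨hxO.2.1.le, hxO.2.2.le⟩, ?_⟩⟩
    show edgePoint v w (x w) ∈ D
    rw [← hform]; exact hxD
  set J := (fun x : V → ℝ => x w) '' N with hJdef
  have hJpre : IsPreconnected J := hNpre.image _ (continuous_apply w).continuousOn
  have hs0J : s0 ∈ J := ⟨edgePoint v w s0, hx0N, edgePoint_snd hne s0⟩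
  have hJT : J ⊆ T := by rintro s ⟨x, hxN, rfl⟩; exact (hNform x hxN).2.2
  have hJle : ∀ s ∈ J, s ≤ s0 := by
    intro s hsJ
    by_contra hc
    push_neg at hc
    have hoc := hJpre.ordConnected
    have hmm : min s s1 ∈ Set.Icc s0 s := ⟨le_min hc.le hs0lt.le, min_le_left _ _⟩
    have hmJ : min s s1 ∈ J := hoc.out hs0J hsJ hmm
    exact hgap (min s s1) (lt_min hc hs0lt) (min_le_right _ _) (hJT hmJ)
  have hJeq : J \ {s0} = J ∩ Set.Iio s0 := by
    ext s
    constructor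
    · rintro ⟨hsJ, hs⟩
      exact ⟨hsJ, lt_of_le_of_ne (hJle s hsJ) (by simpa using hs)⟩
    · rintro ⟨hsJ, hs⟩
      exact ⟨hsJ, ne_of_lt hs⟩
  have hJdpre : IsPreconnected (J \ {s0}) := by
    rw [hJeq]
    exact isPreconnected_iff_ordConnected.mpr (hJpre.ordConnected.inter Set.ordConnected_Iio)
  have hmemN : ∀ s ∈ J, edgePoint v w s ∈ N := by
    intro s hsJ
    obtain ⟨x, hxN, hxw⟩ := hsJ
    have hxw' : x w = s := hxw
    have hform := (hNform x hxN).2.1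
    rw [hxw'] at hform
    rw [← hform]
    exact hxN
  have hmemJd : ∀ s ∈ J \ {s0}, edgePoint v w s ∈ A ∪ B := by
    rintro s ⟨hsJ, hs⟩
    rw [← hNdiff]
    refine ⟨hmemN s hsJ, ?_⟩
    intro hmem
    rw [Set.mem_singleton_iff] at hmem
    exact hs (Set.mem_singleton_iff.mpr (edgePoint_inj hne hmem))
  have hABsubD : A ∪ B ⊆ D := by
    rintro x (hx | hx)
    · rw [hAeq] at hx; exact hx.1
    · rw [hBeq] at hx; exact hx.1
  have hcover : J \ {s0} ⊆ (fun s => edgePoint v w s) ⁻¹' OA ∪ (fun s => edgePoint v w s) ⁻¹' OB := by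
    intro s hs
    rcases hmemJd s hs with h | h
    · left; rw [hAeq] at h; exact h.2
    · right; rw [hBeq] at h; exact h.2
  have hAinJ : ((J \ {s0}) ∩ (fun s => edgePoint v w s) ⁻¹' OA).Nonempty := by
    obtain ⟨a, haA⟩ := hAne
    have haNd : a ∈ N \ {edgePoint v w s0} := by rw [hNdiff]; exact Or.inl haA
    have haN := haNd.1
    obtain ⟨haD, haform, _⟩ := hNform a haN
    have hawJ : a w ∈ J := ⟨a, haN, rfl⟩
    have hawne : a w ≠ s0 := by
      intro h
      apply haNd.2
      rw [Set.mem_singleton_iff, haform, h]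
    refine ⟨a w, ⟨hawJ, by simpa using hawne⟩, ?_⟩
    show edgePoint v w (a w) ∈ OA
    rw [← haform]
    rw [hAeq] at haA
    exact haA.2
  have hBinJ : ((J \ {s0}) ∩ (fun s => edgePoint v w s) ⁻¹' OB).Nonempty := by
    obtain ⟨b, hbB⟩ := hBne
    have hbNd : b ∈ N \ {edgePoint v w s0} := by rw [hNdiff]; exact Or.inr hbB
    have hbN := hbNd.1
    obtain ⟨hbD, hbform, _⟩ := hNform b hbN
    have hbwJ : b w ∈ J := ⟨b, hbN, rfl⟩
    have hbwne : b w ≠ s0 := by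
      intro h
      apply hbNd.2
      rw [Set.mem_singleton_iff, hbform, h]
    refine ⟨b w, ⟨hbwJ, by simpa using hbwne⟩, ?_⟩
    show edgePoint v w (b w) ∈ OB
    rw [← hbform]
    rw [hBeq] at hbB
    exact hbB.2
  obtain ⟨s, hsJd, hsUV⟩ := hJdpre _ _ (hOAo.preimage (continuous_edgePoint v w))
    (hOBo.preimage (continuous_edgePoint v w)) hcover hAinJ hBinJ
  have hxD' : edgePoint v w s ∈ D := hABsubD (hmemJd s hsJd)
  have hxA : edgePoint v w s ∈ A := by rw [hAeq]; exact ⟨hxD', hsUV.1⟩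
  have hxB : edgePoint v w s ∈ B := by rw [hBeq]; exact ⟨hxD', hsUV.2⟩
  exact (disjoint_left.mp hdisj) hxA hxB

lemma edge_absorb {D : Set (V → ℝ)} (hD : Nonempty (↥D ≃ₜ ↥unitCircleSet))
    (hDsub : D ⊆ GraphRealization G) {v w : V} (hvw : G.Adj v w)
    {t : ℝ} (ht : t ∈ Set.Ioo (0:ℝ) 1) (htD : edgePoint v w t ∈ D) : EdgeFull D v w := by
  intro s hs
  rcases le_or_gt t s with h | h
  · exact edge_absorb_right hD hDsub hvw ht htD hs h
  · have htD' : edgePoint w v (1 - t) ∈ D := by rw [← edgePoint_flip]; exact htD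
    have h' : edgePoint w v (1 - s) ∈ D := by
      refine edge_absorb_right hD hDsub hvw.symm
        (⟨by linarith [ht.2], by linarith [ht.1]⟩ : (1:ℝ) - t ∈ Set.Ioo (0:ℝ) 1) htD'
        (⟨by linarith [hs.2], by linarith [hs.1]⟩ : (1:ℝ) - s ∈ Set.Icc (0:ℝ) 1)
        (by linarith)
    rw [edgePoint_flip]
    exact h'

end SCCGraph

section SCC2
variable {V : Type*} {G : SimpleGraph V}

lemma star_piece {D : Set (V → ℝ)} (hDsub : D ⊆ GraphRealization G) {u : V}
    {S : Set (V → ℝ)} (hSpre : IsPreconnected S) (hSne : S.Nonempty)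
    (hSsub : ∀ x ∈ S, x ∈ D ∧ 1/2 < x u ∧ x ≠ vertexPoint u) :
    ∃ w, G.Adj u w ∧ ∀ x ∈ S, x = edgePoint u w (x w) ∧ x w ∈ Set.Ioo (0:ℝ) (1/2) := by
  classical
  obtain ⟨a, haS⟩ := hSne
  obtain ⟨haD, hau, hane⟩ := hSsub a haS
  obtain ⟨w0, hw0adj, hw0mem, hw0eq⟩ := star_cases (hDsub haD) hau hane
  refine ⟨w0, hw0adj, ?_⟩
  intro x hxS
  obtain ⟨hxD, hxu, hxne⟩ := hSsub x hxS
  obtain ⟨w1, hw1adj, hw1mem, hw1eq⟩ := star_cases (hDsub hxD) hxu hxne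
  by_cases hww : w1 = w0
  · subst hww; exact ⟨hw1eq, hw1mem⟩
  · exfalso
    set U : Set (V → ℝ) := {y | 0 < y w0} with hU
    set W : Set (V → ℝ) := ⋃ (w' : {w' : V // w' ≠ w0 ∧ w' ≠ u}), {y : V → ℝ | 0 < y w'.1}
      with hW
    have hUo : IsOpen U := isOpen_lt continuous_const (continuous_apply w0)
    have hWo : IsOpen W := isOpen_iUnion fun w' =>
      isOpen_lt continuous_const (continuous_apply w'.1)
    have hcover : S ⊆ U ∪ W := by
      intro y hyS
      obtain ⟨hyD, hyu, hyne⟩ := hSsub y hyS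
      obtain ⟨w2, hw2adj, hw2mem, hw2eq⟩ := star_cases (hDsub hyD) hyu hyne
      by_cases h2 : w2 = w0
      · left; show 0 < y w0; rw [← h2]; exact hw2mem.1
      · right
        exact Set.mem_iUnion.mpr ⟨⟨w2, h2, hw2adj.ne'⟩, hw2mem.1⟩
    have hSU : (S ∩ U).Nonempty := ⟨a, haS, hw0mem.1⟩
    have hSW : (S ∩ W).Nonempty :=
      ⟨x, hxS, Set.mem_iUnion.mpr ⟨⟨w1, hww, hw1adj.ne'⟩, hw1mem.1⟩⟩
    obtain ⟨y, hyS, hyU, hyW⟩ := hSpre U W hUo hWo hcover hSU hSW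
    obtain ⟨hyD, hyu, hyne⟩ := hSsub y hyS
    obtain ⟨w2, hw2adj, hw2mem, hw2eq⟩ := star_cases (hDsub hyD) hyu hyne
    have hyw0 : y w0 ≠ 0 := ne_of_gt hyU
    have h1 : w0 = u ∨ w0 = w2 := by
      apply support_subset (v := u) (w := w2) (t := y w2)
      rw [← hw2eq]
      exact hyw0
    have hw0w2 : w0 = w2 := h1.resolve_left hw0adj.ne'
    obtain ⟨w', hw'⟩ := Set.mem_iUnion.mp hyW
    have hyw' : y w'.1 ≠ 0 := ne_of_gt hw'
    have h2 : w'.1 = u ∨ w'.1 = w2 := by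
      apply support_subset (v := u) (w := w2) (t := y w2)
      rw [← hw2eq]
      exact hyw'
    have := h2.resolve_left w'.2.2
    exact w'.2.1 (this.trans hw0w2.symm)

lemma vertex_two_edges {D : Set (V → ℝ)} (hD : Nonempty (↥D ≃ₜ ↥unitCircleSet))
    (hDsub : D ⊆ GraphRealization G) {u : V} (hu : vertexPoint u ∈ D) :
    ∃ w1 w2, w1 ≠ w2 ∧ G.Adj u w1 ∧ G.Adj u w2 ∧ EdgeFull D u w1 ∧ EdgeFull D u w2 := by
  classical
  set O : Set (V → ℝ) := (fun x : V → ℝ => x u) ⁻¹' Set.Ioi (1/2) with hOdef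
  have hOopen : IsOpen O := isOpen_Ioi.preimage (continuous_apply u)
  have huO : vertexPoint u ∈ O := by
    show (1:ℝ)/2 < vertexPoint u u
    rw [vertexPoint_self]; norm_num
  obtain ⟨N, A, B, ⟨ON, hONo, hNeq⟩, ⟨OA, hOAo, hAeq⟩, ⟨OB, hOBo, hBeq⟩, huN, hNO, hNpre,
    hNdiff, hdisj, hAne, hBne, hApre, hBpre⟩ := scc_local hD hu hOopen huO
  have hsubprop : ∀ x ∈ N \ {vertexPoint u}, x ∈ D ∧ 1/2 < x u ∧ x ≠ vertexPoint u := by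
    rintro x ⟨hxN, hxne⟩
    have hxD : x ∈ D := by rw [hNeq] at hxN; exact hxN.1
    exact ⟨hxD, hNO hxN, by simpa using hxne⟩
  have hAprop : ∀ x ∈ A, x ∈ D ∧ 1/2 < x u ∧ x ≠ vertexPoint u :=
    fun x hx => hsubprop x (by rw [hNdiff]; exact Or.inl hx)
  have hBprop : ∀ x ∈ B, x ∈ D ∧ 1/2 < x u ∧ x ≠ vertexPoint u :=
    fun x hx => hsubprop x (by rw [hNdiff]; exact Or.inr hx)
  obtain ⟨wA, hwAadj, hwAform⟩ := star_piece hDsub hApre hAne hAprop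
  obtain ⟨wB, hwBadj, hwBform⟩ := star_piece hDsub hBpre hBne hBprop
  have hfullA : EdgeFull D u wA := by
    obtain ⟨a, haA⟩ := hAne
    obtain ⟨heq, hIoo⟩ := hwAform a haA
    refine edge_absorb hD hDsub hwAadj ⟨hIoo.1, by linarith [hIoo.2]⟩ ?_
    rw [← heq]; exact (hAprop a haA).1
  have hfullB : EdgeFull D u wB := by
    obtain ⟨b, hbB⟩ := hBne
    obtain ⟨heq, hIoo⟩ := hwBform b hbB
    refine edge_absorb hD hDsub hwBadj ⟨hIoo.1, by linarith [hIoo.2]⟩ ?_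
    rw [← heq]; exact (hBprop b hbB).1
  refine ⟨wA, wB, ?_, hwAadj, hwBadj, hfullA, hfullB⟩
  intro hww
  rw [← hww] at hwBform
  -- both halves of N map into the same edge: contradiction
  set J := (fun x : V → ℝ => x wA) '' N with hJ
  have hNform : ∀ x ∈ N, x = edgePoint u wA (x wA) ∧ x wA ∈ Set.Ico (0:ℝ) (1/2) := by
    intro x hxN
    by_cases hxv : x = vertexPoint u
    · constructor
      · rw [hxv, vertexPoint_ne hwAadj.ne', edgePoint_zero]
      · rw [hxv, vertexPoint_ne hwAadj.ne']
        norm_num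
    · have hxAB : x ∈ A ∪ B := by
        rw [← hNdiff]; exact ⟨hxN, by simpa using hxv⟩
      rcases hxAB with hx | hx
      · obtain ⟨heq, hIoo⟩ := hwAform x hx
        exact ⟨heq, ⟨hIoo.1.le, hIoo.2⟩⟩
      · obtain ⟨heq, hIoo⟩ := hwBform x hx
        exact ⟨heq, ⟨hIoo.1.le, hIoo.2⟩⟩
  have hJpre : IsPreconnected J := hNpre.image _ (continuous_apply wA).continuousOn
  have h0J : (0:ℝ) ∈ J :=
    ⟨vertexPoint u, huN, by show vertexPoint u wA = 0; exact vertexPoint_ne hwAadj.ne'⟩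
  have hJIci : J ⊆ Set.Ici (0:ℝ) := by
    rintro s ⟨x, hxN, rfl⟩
    exact (hNform x hxN).2.1
  have hmemN : ∀ s ∈ J, edgePoint u wA s ∈ N := by
    intro s hsJ
    obtain ⟨x, hxN, hxw⟩ := hsJ
    have hxw' : x wA = s := hxw
    have hform := (hNform x hxN).1
    rw [hxw'] at hform
    rw [← hform]
    exact hxN
  have hJdeq : J \ {0} = J ∩ Set.Ioi 0 := by
    ext s
    constructor
    · rintro ⟨hsJ, hs⟩
      exact ⟨hsJ, lt_of_le_of_ne (hJIci hsJ) (Ne.symm (by simpa using hs))⟩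
    · rintro ⟨hsJ, hs⟩
      exact ⟨hsJ, ne_of_gt hs⟩
  have hJdpre : IsPreconnected (J \ {0}) := by
    rw [hJdeq]
    exact isPreconnected_iff_ordConnected.mpr (hJpre.ordConnected.inter Set.ordConnected_Ioi)
  have hmemJd : ∀ s ∈ J \ {0}, edgePoint u wA s ∈ A ∪ B := by
    rintro s ⟨hsJ, hs⟩
    rw [← hNdiff]
    refine ⟨hmemN s hsJ, ?_⟩
    intro hmem
    rw [Set.mem_singleton_iff] at hmem
    apply hs
    rw [Set.mem_singleton_iff]
    have : edgePoint u wA s wA = vertexPoint u wA := by rw [hmem]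
    rwa [edgePoint_snd hwAadj.ne, vertexPoint_ne hwAadj.ne'] at this
  have hABsubD : A ∪ B ⊆ D := by
    rintro x (hx | hx)
    · rw [hAeq] at hx; exact hx.1
    · rw [hBeq] at hx; exact hx.1
  have hcover : J \ {0} ⊆
      (fun s => edgePoint u wA s) ⁻¹' OA ∪ (fun s => edgePoint u wA s) ⁻¹' OB := by
    intro s hs
    rcases hmemJd s hs with h | h
    · left; rw [hAeq] at h; exact h.2
    · right; rw [hBeq] at h; exact h.2
  have hAinJ : ((J \ {0}) ∩ (fun s => edgePoint u wA s) ⁻¹' OA).Nonempty := by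
    obtain ⟨a, haA⟩ := hAne
    have haN : a ∈ N := by
      have : a ∈ N \ {vertexPoint u} := by rw [hNdiff]; exact Or.inl haA
      exact this.1
    obtain ⟨haform, haIoo⟩ := hwAform a haA
    refine ⟨a wA, ⟨⟨a, haN, rfl⟩, by simpa using ne_of_gt haIoo.1⟩, ?_⟩
    show edgePoint u wA (a wA) ∈ OA
    rw [← haform]
    rw [hAeq] at haA
    exact haA.2
  have hBinJ : ((J \ {0}) ∩ (fun s => edgePoint u wA s) ⁻¹' OB).Nonempty := by
    obtain ⟨b, hbB⟩ := hBne
    have hbN : b ∈ N := by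
      have : b ∈ N \ {vertexPoint u} := by rw [hNdiff]; exact Or.inr hbB
      exact this.1
    obtain ⟨hbform, hbIoo⟩ := hwBform b hbB
    refine ⟨b wA, ⟨⟨b, hbN, rfl⟩, by simpa using ne_of_gt hbIoo.1⟩, ?_⟩
    show edgePoint u wA (b wA) ∈ OB
    rw [← hbform]
    rw [hBeq] at hbB
    exact hbB.2
  obtain ⟨s, hsJd, hsUV⟩ := hJdpre _ _ (hOAo.preimage (continuous_edgePoint u wA))
    (hOBo.preimage (continuous_edgePoint u wA)) hcover hAinJ hBinJ
  have hxD' : edgePoint u wA s ∈ D := hABsubD (hmemJd s hsJd)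
  have hxA : edgePoint u wA s ∈ A := by rw [hAeq]; exact ⟨hxD', hsUV.1⟩
  have hxB : edgePoint u wA s ∈ B := by rw [hBeq]; exact ⟨hxD', hsUV.2⟩
  exact (disjoint_left.mp hdisj) hxA hxB

lemma vertex_not_three {D : Set (V → ℝ)} (hD : Nonempty (↥D ≃ₜ ↥unitCircleSet))
    (hDsub : D ⊆ GraphRealization G) {u w1 w2 w3 : V}
    (h12 : w1 ≠ w2) (h13 : w1 ≠ w3) (h23 : w2 ≠ w3)
    (ha1 : G.Adj u w1) (ha2 : G.Adj u w2) (ha3 : G.Adj u w3)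
    (hf1 : EdgeFull D u w1) (hf2 : EdgeFull D u w2) (hf3 : EdgeFull D u w3) : False := by
  classical
  have hu : vertexPoint u ∈ D := by
    have := hf1 0 ⟨le_refl 0, zero_le_one⟩
    rwa [edgePoint_zero] at this
  set O : Set (V → ℝ) := (fun x : V → ℝ => x u) ⁻¹' Set.Ioi (1/2) with hOdef
  have hOopen : IsOpen O := isOpen_Ioi.preimage (continuous_apply u)
  have huO : vertexPoint u ∈ O := by
    show (1:ℝ)/2 < vertexPoint u u
    rw [vertexPoint_self]; norm_num
  obtain ⟨N, A, B, ⟨ON, hONo, hNeq⟩, ⟨OA, hOAo, hAeq⟩, ⟨OB, hOBo, hBeq⟩, huN, hNO, hNpre,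
    hNdiff, hdisj, hAne, hBne, hApre, hBpre⟩ := scc_local hD hu hOopen huO
  have hsubprop : ∀ x ∈ N \ {vertexPoint u}, x ∈ D ∧ 1/2 < x u ∧ x ≠ vertexPoint u := by
    rintro x ⟨hxN, hxne⟩
    have hxD : x ∈ D := by rw [hNeq] at hxN; exact hxN.1
    exact ⟨hxD, hNO hxN, by simpa using hxne⟩
  have hAprop : ∀ x ∈ A, x ∈ D ∧ 1/2 < x u ∧ x ≠ vertexPoint u :=
    fun x hx => hsubprop x (by rw [hNdiff]; exact Or.inl hx)
  have hBprop : ∀ x ∈ B, x ∈ D ∧ 1/2 < x u ∧ x ≠ vertexPoint u :=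
    fun x hx => hsubprop x (by rw [hNdiff]; exact Or.inr hx)
  obtain ⟨wA, hwAadj, hwAform⟩ := star_piece hDsub hApre hAne hAprop
  obtain ⟨wB, hwBadj, hwBform⟩ := star_piece hDsub hBpre hBne hBprop
  -- pick one of w1, w2, w3 different from wA and wB
  have hpick : ∃ w, G.Adj u w ∧ EdgeFull D u w ∧ w ≠ wA ∧ w ≠ wB := by
    by_cases e1 : w1 ≠ wA ∧ w1 ≠ wB
    · exact ⟨w1, ha1, hf1, e1.1, e1.2⟩
    by_cases e2 : w2 ≠ wA ∧ w2 ≠ wB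
    · exact ⟨w2, ha2, hf2, e2.1, e2.2⟩
    by_cases e3 : w3 ≠ wA ∧ w3 ≠ wB
    · exact ⟨w3, ha3, hf3, e3.1, e3.2⟩
    exfalso
    simp only [not_and_or, not_not] at e1 e2 e3
    rcases e1 with h1 | h1 <;> rcases e2 with h2 | h2 <;> rcases e3 with h3 | h3 <;>
      first
        | exact h12 (h1.trans h2.symm)
        | exact h13 (h1.trans h3.symm)
        | exact h23 (h2.trans h3.symm)
  obtain ⟨w, hwadj, hwfull, hwA, hwB⟩ := hpick
  -- find a point of the edge uw inside N near the vertex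
  have hcont : ContinuousAt (fun s : ℝ => edgePoint u w s) 0 :=
    (continuous_edgePoint u w).continuousAt
  have hv0 : edgePoint u w 0 = vertexPoint u := edgePoint_zero u w
  have hWopen : IsOpen (ON ∩ O) := hONo.inter hOopen
  have hmemW : vertexPoint u ∈ ON ∩ O := by
    constructor
    · have := huN; rw [hNeq] at this; exact this.2
    · exact huO
  have hpre : IsOpen ((fun s : ℝ => edgePoint u w s) ⁻¹' (ON ∩ O)) :=
    hWopen.preimage (continuous_edgePoint u w)
  have h0pre : (0:ℝ) ∈ (fun s : ℝ => edgePoint u w s) ⁻¹' (ON ∩ O) := by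
    show edgePoint u w 0 ∈ ON ∩ O
    rw [hv0]; exact hmemW
  obtain ⟨ε, hε, hball⟩ := Metric.isOpen_iff.mp hpre 0 h0pre
  set s := min (ε / 2) (1/2 : ℝ) with hs
  have hs0 : 0 < s := lt_min (by linarith) (by norm_num)
  have hs1 : s ≤ 1/2 := min_le_right _ _
  have hsball : s ∈ Metric.ball (0:ℝ) ε := by
    rw [Metric.mem_ball, Real.dist_eq, sub_zero, abs_of_pos hs0]
    calc s ≤ ε / 2 := min_le_left _ _
    _ < ε := by linarith
  have hsmem : edgePoint u w s ∈ ON ∩ O := hball hsball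
  have hxN : edgePoint u w s ∈ N := by
    rw [hNeq]
    exact ⟨hwfull s ⟨hs0.le, by linarith⟩, hsmem.1⟩
  have hxne : edgePoint u w s ≠ vertexPoint u := by
    intro h
    have : edgePoint u w s w = vertexPoint u w := by rw [h]
    rw [edgePoint_snd hwadj.ne, vertexPoint_ne hwadj.ne'] at this
    exact (ne_of_gt hs0) this
  have hxAB : edgePoint u w s ∈ A ∪ B := by
    rw [← hNdiff]
    exact ⟨hxN, by simpa using hxne⟩
  have hwu : w ≠ u := hwadj.ne'
  rcases hxAB with hx | hx
  · obtain ⟨heq, hIoo⟩ := hwAform _ hx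
    have : edgePoint u w s wA = 0 := edgePoint_other hwAadj.ne' (Ne.symm hwA) s
    rw [this] at hIoo
    exact lt_irrefl 0 hIoo.1
  · obtain ⟨heq, hIoo⟩ := hwBform _ hx
    have : edgePoint u w s wB = 0 := edgePoint_other hwBadj.ne' (Ne.symm hwB) s
    rw [this] at hIoo
    exact lt_irrefl 0 hIoo.1

end SCC2


open Set

lemma push_scc {X : Type*} [TopologicalSpace X] {S : Set X} (C₀ : Set ↥S)
    (h : Nonempty (↥C₀ ≃ₜ ↥unitCircleSet)) :
    Nonempty (↥(Subtype.val '' C₀ : Set X) ≃ₜ ↥unitCircleSet) := by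
  obtain ⟨e⟩ := h
  let f : ↥C₀ → ↥(Subtype.val '' C₀ : Set X) := fun a => ⟨a.1.1, ⟨a.1, a.2, rfl⟩⟩
  have hbij : Function.Bijective f := by
    constructor
    · intro a b hab
      have h1 := congrArg (Subtype.val : ↥(Subtype.val '' C₀ : Set X) → X) hab
      exact Subtype.ext (Subtype.ext h1)
    · rintro ⟨y, ⟨a, ha, rfl⟩⟩
      exact ⟨⟨a, ha⟩, rfl⟩
  let g : ↥C₀ ≃ ↥(Subtype.val '' C₀ : Set X) := Equiv.ofBijective f hbij
  have hcont : Continuous g := by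
    apply Continuous.subtype_mk
    exact continuous_subtype_val.comp continuous_subtype_val
  have hind : Topology.IsInducing g := by
    refine Topology.IsInducing.of_comp hcont continuous_subtype_val ?_
    have h2 : Topology.IsInducing ((Subtype.val : ↥S → X) ∘ (Subtype.val : ↥C₀ → ↥S)) :=
      Topology.IsInducing.subtypeVal.comp Topology.IsInducing.subtypeVal
    exact h2
  exact ⟨(g.toHomeomorphOfIsInducing hind).symm.trans e⟩

lemma scc_preconnected {X : Type*} [TopologicalSpace X] {D : Set X}
    (hD : Nonempty (↥D ≃ₜ ↥unitCircleSet)) : PreconnectedSpace ↥D := by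
  obtain ⟨e⟩ := hD
  have h1 : PreconnectedSpace ↥unitCircleSet :=
    Subtype.preconnectedSpace isPreconnected_unitCircleSet
  constructor
  have huniv : (univ : Set ↥D) = e.symm '' univ := by
    rw [Set.image_univ, Homeomorph.range_coe]
  rw [huniv]
  exact h1.isPreconnected_univ.image _ e.symm.continuous.continuousOn

variable {V : Type*}


end Extra

/-- A graph `G` with at least one edge is 3-circle connected iff `|G|` is
homeomorphic to the circle. -/
theorem statement18 {V : Type*} (G : SimpleGraph V) (hE : ∃ v w, G.Adj v w) :
    NCircleConn ↥(GraphRealization G) 3 ↔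
      Nonempty (↥(GraphRealization G) ≃ₜ ↥unitCircleSet) := by
  constructor
  · intro hNCC
    classical
    obtain ⟨v, w, hvw⟩ := hE
    have hm : edgePoint v w (1/2) ∈ GraphRealization G := edgePoint_mem hvw (by norm_num)
    set m : ↥(GraphRealization G) := ⟨edgePoint v w (1/2), hm⟩ with hmdef
    obtain ⟨C₀, hC₀scc, hC₀sub⟩ := hNCC {m} (by simp)
    have hmC₀ : m ∈ C₀ := hC₀sub (by simp)
    set C : Set (V → ℝ) := Subtype.val '' C₀ with hCdef
    have hC : Nonempty (↥C ≃ₜ ↥unitCircleSet) := push_scc C₀ hC₀scc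
    have hCsub : C ⊆ GraphRealization G := by rintro x ⟨a, _, rfl⟩; exact a.2
    have hCcl : IsClosed C := scc_isClosed hC
    have hCm : edgePoint v w (1/2) ∈ C := ⟨m, hmC₀, rfl⟩
    have hsubset : GraphRealization G ⊆ C := by
      intro x hx
      set x' : ↥(GraphRealization G) := ⟨x, hx⟩ with hx'def
      obtain ⟨D₀, hD₀scc, hD₀sub⟩ := hNCC {m, x'}
        (le_trans (Finset.card_insert_le _ _) (by simp))
      have hmD₀ : m ∈ D₀ := hD₀sub (by simp)
      have hxD₀ : x' ∈ D₀ := hD₀sub (by simp)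
      set D : Set (V → ℝ) := Subtype.val '' D₀ with hDdef
      have hD : Nonempty (↥D ≃ₜ ↥unitCircleSet) := push_scc D₀ hD₀scc
      have hDsub : D ⊆ GraphRealization G := by rintro y ⟨a, _, rfl⟩; exact a.2
      have hmD : edgePoint v w (1/2) ∈ D := ⟨m, hmD₀, rfl⟩
      have hxD : x ∈ D := ⟨x', hxD₀, rfl⟩
      have hDpc : PreconnectedSpace ↥D := scc_preconnected hD
      set F : Set ↥D := Subtype.val ⁻¹' C with hF
      have hFcl : IsClosed F := hCcl.preimage continuous_subtype_val
      have hFopen : IsOpen F := by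
        rw [isOpen_iff_forall_mem_open]
        intro y hyF
        have hyG : (y : V → ℝ) ∈ GraphRealization G := hDsub y.2
        rcases mem_realization_cases hyG with ⟨u, hyu⟩ | ⟨a, b, r, hab, hr, hyab⟩
        · -- vertex case
          have huC : vertexPoint u ∈ C := by rw [← hyu]; exact hyF
          obtain ⟨w1, w2, h12, haj1, haj2, hCf1, hCf2⟩ := vertex_two_edges hC hCsub huC
          refine ⟨Subtype.val ⁻¹' ((fun z : V → ℝ => z u) ⁻¹' Set.Ioi (1/2)), ?_, ?_, ?_⟩
          · rintro z hz
            show (z : V → ℝ) ∈ C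
            by_cases hzv : (z : V → ℝ) = vertexPoint u
            · rw [hzv]; exact huC
            · obtain ⟨w', haj', hIoo', heq'⟩ := star_cases (hDsub z.2) hz hzv
              have hDf' : EdgeFull D u w' := by
                refine edge_absorb hD hDsub haj' ⟨hIoo'.1, by linarith [hIoo'.2]⟩ ?_
                rw [← heq']; exact z.2
              have hw'mem : w' = w1 ∨ w' = w2 := by
                by_contra hcon
                push_neg at hcon
                have hm1 : edgePoint u w1 (1/2) ∈ GraphRealization G :=
                  edgePoint_mem haj1 (by norm_num)
                have hm2 : edgePoint u w2 (1/2) ∈ GraphRealization G :=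
                  edgePoint_mem haj2 (by norm_num)
                have hm3 : edgePoint u w' (1/2) ∈ GraphRealization G :=
                  edgePoint_mem haj' (by norm_num)
                set p1 : ↥(GraphRealization G) := ⟨_, hm1⟩ with hp1
                set p2 : ↥(GraphRealization G) := ⟨_, hm2⟩ with hp2
                set p3 : ↥(GraphRealization G) := ⟨_, hm3⟩ with hp3
                have hcard : ({p1, p2, p3} : Finset ↥(GraphRealization G)).card ≤ 3 := by
                  apply le_trans (Finset.card_insert_le _ _)
                  have h2 : ({p2, p3} : Finset ↥(GraphRealization G)).card ≤ 2 := by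
                    apply le_trans (Finset.card_insert_le _ _)
                    simp
                  omega
                obtain ⟨E₀, hE₀scc, hE₀sub⟩ := hNCC {p1, p2, p3} hcard
                set E : Set (V → ℝ) := Subtype.val '' E₀ with hEdef
                have hEh : Nonempty (↥E ≃ₜ ↥unitCircleSet) := push_scc E₀ hE₀scc
                have hEsub : E ⊆ GraphRealization G := by rintro t ⟨c, _, rfl⟩; exact c.2
                have hp1E : edgePoint u w1 (1/2) ∈ E := ⟨p1, hE₀sub (by simp), rfl⟩
                have hp2E : edgePoint u w2 (1/2) ∈ E := ⟨p2, hE₀sub (by simp), rfl⟩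
                have hp3E : edgePoint u w' (1/2) ∈ E := ⟨p3, hE₀sub (by simp), rfl⟩
                have hEf1 : EdgeFull E u w1 :=
                  edge_absorb hEh hEsub haj1 (by norm_num) hp1E
                have hEf2 : EdgeFull E u w2 :=
                  edge_absorb hEh hEsub haj2 (by norm_num) hp2E
                have hEf3 : EdgeFull E u w' :=
                  edge_absorb hEh hEsub haj' (by norm_num) hp3E
                exact vertex_not_three hEh hEsub h12 hcon.1.symm hcon.2.symm
                  haj1 haj2 haj' hEf1 hEf2 hEf3
              have hCf' : EdgeFull C u w' := by
                rcases hw'mem with h | h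
                · rw [h]; exact hCf1
                · rw [h]; exact hCf2
              rw [heq']
              exact hCf' _ ⟨hIoo'.1.le, by linarith [hIoo'.2]⟩
          · exact ((isOpen_Ioi.preimage (continuous_apply u)).preimage continuous_subtype_val)
          · show (1:ℝ)/2 < (y : V → ℝ) u
            rw [hyu, vertexPoint_self]
            norm_num
        · -- interior edge point case
          have hyC : edgePoint a b r ∈ C := by rw [← hyab]; exact hyF
          have hCfab : EdgeFull C a b := edge_absorb hC hCsub hab hr hyC
          refine ⟨Subtype.val ⁻¹' ((fun z : V → ℝ => z a) ⁻¹' Set.Ioo 0 1 ∩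
            (fun z : V → ℝ => z b) ⁻¹' Set.Ioo 0 1), ?_, ?_, ?_⟩
          · rintro z ⟨hza, hzb⟩
            show (z : V → ℝ) ∈ C
            obtain ⟨_, heqz⟩ := eq_edgePoint_of_coords (hDsub z.2) hab.ne hza hzb
            rw [heqz]
            exact hCfab _ ⟨le_of_lt hzb.1, le_of_lt hzb.2⟩
          · exact (((isOpen_Ioo.preimage (continuous_apply a)).inter
              (isOpen_Ioo.preimage (continuous_apply b)))).preimage continuous_subtype_val
          · constructor
            · show (y : V → ℝ) a ∈ Set.Ioo (0:ℝ) 1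
              rw [hyab, edgePoint_fst hab.ne]
              exact ⟨by linarith [hr.2], by linarith [hr.1]⟩
            · show (y : V → ℝ) b ∈ Set.Ioo (0:ℝ) 1
              rw [hyab, edgePoint_snd hab.ne]
              exact hr
      have hclopen : IsClopen F := ⟨hFcl, hFopen⟩
      rcases isClopen_iff.mp hclopen with h | h
      · exfalso
        have hmem : (⟨edgePoint v w (1/2), hmD⟩ : ↥D) ∈ F := hCm
        rw [h] at hmem
        exact hmem
      · have hmem : (⟨x, hxD⟩ : ↥D) ∈ F := by rw [h]; trivial
        exact hmem
    have heq : GraphRealization G = C := Set.Subset.antisymm hsubset hCsub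
    obtain ⟨e⟩ := hC
    exact ⟨(Homeomorph.setCongr heq).trans e⟩
  · rintro ⟨e⟩ S hS
    exact ⟨Set.univ, ⟨(Homeomorph.Set.univ _).trans e⟩, Set.subset_univ _⟩
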